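/- There exists a permutation σ of {1,2,3,4,5} with σ(3) = 3 such that the unitary P_σ · H^{⊗5}, where P_σ is the operator permuting the five tensor factors according to σ and H is the Hadamard gate, maps the codespace of the 5-qubit code onto itself and implements, up to a global phase, the logical Hadamard gate: P_σ·H^{⊗5}|0̄⟩ = ω(|0̄⟩+|1̄⟩)/√2 and P_σ·H^{⊗5}|1̄⟩ = ω(|0̄⟩−|1̄⟩)/√2 for some unimodular ω ∈ ℂ. -/

import Mathlib

open scoped Classical
open Matrix

noncomputable section

/-- basis vector `|x⟩` -/
def bvec {α : Type*} (x : α) : α → ℂ := fun y => if y = x then 1 else 0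

/-- inner product `⟪v, w⟫` on basis-indexed amplitude vectors -/
def qInner {α : Type*} [Fintype α] (v w : α → ℂ) : ℂ :=
  ∑ x, (starRingEnd ℂ) (v x) * w x

/-- Pauli X -/
def σx : Matrix Bool Bool ℂ := Matrix.of fun a b => if a = !b then 1 else 0
/-- Pauli Y -/
def σy : Matrix Bool Bool ℂ :=
  Matrix.of fun a b => if a = !b then (if a then Complex.I else -Complex.I) else 0
/-- Pauli Z -/
def σz : Matrix Bool Bool ℂ := Matrix.of fun a b => if a = b then (if a then -1 else 1) else 0
/-- Hadamard -/
def Hgate : Matrix Bool Bool ℂ :=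
  Matrix.of fun a b => (if a && b then -1 else 1) / (Real.sqrt 2 : ℂ)
/-- phase gate S = diag(1, i) -/
def Sgate : Matrix Bool Bool ℂ :=
  Matrix.of fun a b => if a = b then (if a then Complex.I else 1) else 0
/-- Z(θ) = diag(1, e^{iθ}) -/
def Zrot (θ : ℝ) : Matrix Bool Bool ℂ :=
  Matrix.of fun a b => if a = b then (if a then Complex.exp (θ * Complex.I) else 1) else 0

/-- tensor product over `ι` of single-qubit matrices -/
def tensMat {ι : Type*} [Fintype ι] (P : ι → Matrix Bool Bool ℂ) :
    Matrix (ι → Bool) (ι → Bool) ℂ :=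
  Matrix.of fun x y => ∏ i, P i (x i) (y i)

/-- CNOT with control `i`, target `t`, in one register -/
def CNOT {ι : Type*} (i t : ι) : Matrix (ι → Bool) (ι → Bool) ℂ :=
  Matrix.of fun y x => if y = Function.update x t (xor (x i) (x t)) then 1 else 0

/-- Z(θ) applied to qubit `t` -/
def ZrotAt {ι : Type*} (θ : ℝ) (t : ι) : Matrix (ι → Bool) (ι → Bool) ℂ :=
  Matrix.of fun y x => if y = x then (if x t then Complex.exp (θ * Complex.I) else 1) else 0

/-- `parityOdd A x` : the bits of `x` indexed by `A` have odd parity -/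
def parityOdd {ι : Type*} (A : Finset ι) (x : ι → Bool) : Prop :=
  (A.filter fun i => x i = true).card % 2 = 1

/-- `∏_{i ∈ A} Z_i` -/
def ZA {ι : Type*} [Fintype ι] (A : Finset ι) : Matrix (ι → Bool) (ι → Bool) ℂ :=
  tensMat fun i => if i ∈ A then σz else 1

/-- `∏_{j ∈ B} X_j` -/
def XB {ι : Type*} [Fintype ι] (B : Finset ι) : Matrix (ι → Bool) (ι → Bool) ℂ :=
  tensMat fun j => if j ∈ B then σx else 1

/-- the joint `+1`-eigenspace of a set of matrices, as a submodule -/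
def jointFixed {ι : Type*} [Fintype ι] (S : Set (Matrix (ι → Bool) (ι → Bool) ℂ)) :
    Submodule ℂ ((ι → Bool) → ℂ) where
  carrier := {v | ∀ g ∈ S, g.mulVec v = v}
  add_mem' := by
    intro a b ha hb g hg
    rw [Matrix.mulVec_add, ha g hg, hb g hg]
  zero_mem' := by
    intro g hg
    rw [Matrix.mulVec_zero]
  smul_mem' := by
    intro c a ha g hg
    rw [Matrix.mulVec_smul, ha g hg]

/-- a matrix on qubits `ι` acts only on the qubits in `A` (identity elsewhere) -/
def ActsOnlyOn {ι : Type*} (M : Matrix (ι → Bool) (ι → Bool) ℂ) (A : Set ι) : Prop :=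
  ∃ W : Matrix (A → Bool) (A → Bool) ℂ,
    ∀ x y, M x y =
      if ∀ i, i ∉ A → x i = y i then W (fun i => x i.val) (fun i => y i.val) else 0

/-- an `ι`-qubit Pauli operator `i^c · ⨂_i P_i` -/
structure PauliOp (ι : Type*) [Fintype ι] where
  phase : Fin 4
  fac : ι → Matrix Bool Bool ℂ
  isPauli : ∀ i, fac i = 1 ∨ fac i = σx ∨ fac i = σy ∨ fac i = σz

def PauliOp.toMatrix {ι : Type*} [Fintype ι] (p : PauliOp ι) :
    Matrix (ι → Bool) (ι → Bool) ℂ :=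
  Complex.I ^ (p.phase : ℕ) • tensMat p.fac

/-- number of non-identity tensor factors -/
def PauliOp.weight {ι : Type*} [Fintype ι] (p : PauliOp ι) : ℕ :=
  Set.ncard {i | p.fac i ≠ 1}

/-- tensor product of states of two registers -/
def tens2 {ι κ : Type*} (v : (ι → Bool) → ℂ) (w : (κ → Bool) → ℂ) :
    (ι → Bool) × (κ → Bool) → ℂ :=
  fun p => v p.1 * w p.2

/-- CNOT with control qubit `i` of the first register and target qubit `j` of the second -/
def CNOT2 {ι κ : Type*} (i : ι) (j : κ) :
    Matrix ((ι → Bool) × (κ → Bool)) ((ι → Bool) × (κ → Bool)) ℂ :=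
  Matrix.of fun y x =>
    if y = (x.1, Function.update x.2 j (xor (x.1 i) (x.2 j))) then 1 else 0

-- Steane code
def steaneGen : Fin 3 → (Fin 7 → Bool) :=
  ![![false, false, false, true, true, true, true],
    ![false, true, true, false, false, true, true],
    ![true, false, true, false, true, false, true]]

/-- the binary [7,3] code generated by 0001111, 0110011, 1010101 -/
def hammingC : Set (Fin 7 → Bool) :=
  {c | ∃ a b e : Bool,
    c = fun i => xor (a && steaneGen 0 i) (xor (b && steaneGen 1 i) (e && steaneGen 2 i))}

/-- Steane logical basis: `steane false = |0̄⟩`, `steane true = |1̄⟩ = X^{⊗7}|0̄⟩` -/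
def steane : Bool → ((Fin 7 → Bool) → ℂ) := fun b =>
  if b then (tensMat fun _ => σx).mulVec (fun y => if y ∈ hammingC then ((Real.sqrt 8 : ℂ))⁻¹ else 0)
  else fun y => if y ∈ hammingC then ((Real.sqrt 8 : ℂ))⁻¹ else 0

-- 5-qubit code
def fiveStab : Fin 4 → Matrix (Fin 5 → Bool) (Fin 5 → Bool) ℂ :=
  ![tensMat ![σx, σz, σz, σx, 1],
    tensMat ![1, σx, σz, σz, σx],
    tensMat ![σx, 1, σx, σz, σz],
    tensMat ![σz, σx, 1, σx, σz]]

def fiveCodespace : Submodule ℂ ((Fin 5 → Bool) → ℂ) :=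
  jointFixed (Set.range fiveStab)

/-- a choice of logical basis for the 5-qubit code -/
def fiveLogical (v : Bool → ((Fin 5 → Bool) → ℂ)) : Prop :=
  (∀ b, v b ∈ fiveCodespace) ∧ (∀ b, qInner (v b) (v b) = 1) ∧
  (tensMat fun _ : Fin 5 => σz).mulVec (v false) = v false ∧
  (tensMat fun _ : Fin 5 => σz).mulVec (v true) = -(v true) ∧
  (tensMat fun _ : Fin 5 => σx).mulVec (v false) = v true

-- [[15,1,3]] Reed–Muller code
def rmBit (i : Fin 15) (j : Fin 4) : Bool := Nat.testBit (i.val + 1) j.val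

def rmXstab (j : Fin 4) : Matrix (Fin 15 → Bool) (Fin 15 → Bool) ℂ :=
  tensMat fun i => if rmBit i j then σx else 1

def rmZstab (j k : Fin 4) : Matrix (Fin 15 → Bool) (Fin 15 → Bool) ℂ :=
  tensMat fun i => if rmBit i j && rmBit i k then σz else 1

def rmCodespace : Submodule ℂ ((Fin 15 → Bool) → ℂ) :=
  jointFixed ({M | ∃ j, M = rmXstab j} ∪ {M | ∃ j k, j < k ∧ M = rmZstab j k})

/-- a choice of logical basis for the [[15,1,3]] Reed–Muller code -/
def rmLogical (w : Bool → ((Fin 15 → Bool) → ℂ)) : Prop :=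
  (∀ b, w b ∈ rmCodespace) ∧ (∀ b, qInner (w b) (w b) = 1) ∧
  (tensMat fun _ : Fin 15 => σz).mulVec (w false) = w false ∧
  (tensMat fun _ : Fin 15 => σz).mulVec (w true) = -(w true) ∧
  (tensMat fun _ : Fin 15 => σx).mulVec (w false) = w true


/-- the operator permuting the five tensor factors according to `σ`
(factor `i` is sent to position `σ i`). -/
def permMat (σ : Equiv.Perm (Fin 5)) : Matrix (Fin 5 → Bool) (Fin 5 → Bool) ℂ :=
  Matrix.of fun y x => if y = x ∘ σ.symm then 1 else 0


-- ===================== auxiliary development =====================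

def zX : Matrix Bool Bool ℤ := Matrix.of fun a b => if a = !b then 1 else 0
def zZ : Matrix Bool Bool ℤ := Matrix.of fun a b => if a = b then (if a then -1 else 1) else 0
def zH : Matrix Bool Bool ℤ := Matrix.of fun a b => if a && b then -1 else 1

def tzM (P : Fin 5 → Matrix Bool Bool ℤ) : Matrix (Fin 5 → Bool) (Fin 5 → Bool) ℤ :=
  Matrix.of fun x y => ∏ i, P i (x i) (y i)

def castM (M : Matrix (Fin 5 → Bool) (Fin 5 → Bool) ℤ) :
    Matrix (Fin 5 → Bool) (Fin 5 → Bool) ℂ := M.map Int.cast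

def mkSP (d : Bool) (e : Bool → ℤ) : Matrix Bool Bool ℤ :=
  Matrix.of fun a b => if b = xor d a then e a else 0

def gensZ : Fin 5 → Fin 5 → Matrix Bool Bool ℤ :=
  ![![zX, zZ, zZ, zX, 1], ![1, zX, zZ, zZ, zX], ![zX, 1, zX, zZ, zZ],
    ![zZ, zX, 1, zX, zZ], ![zZ, zZ, zZ, zZ, zZ]]

def selL (n : ℕ) : List (Fin 5) := (List.finRange 5).filter fun k => n / 2 ^ (k : ℕ) % 2 = 1

def prodG (L : List (Fin 5)) (i : Fin 5) : Matrix Bool Bool ℤ :=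
  L.foldr (fun k acc => gensZ k i * acc) 1

def ctbl : Bool → List ℤ := fun b =>
  if b then [0, -1, -1, 0, -1, 0, 0, -1, -1, 0, 0, 1, 0, 1, -1, 0, -1, 0, 0, -1, 0, 1, 1, 0, 0, -1, 1, 0, -1, 0, 0, 1]
  else [1, 0, 0, -1, 0, 1, -1, 0, 0, 1, 1, 0, -1, 0, 0, -1, 0, -1, 1, 0, 1, 0, 0, -1, -1, 0, 0, -1, 0, -1, -1, 0]

def czv (b : Bool) (x : Fin 5 → Bool) : ℤ :=
  (ctbl b).getD ((cond (x 0) 16 0) + (cond (x 1) 8 0) + (cond (x 2) 4 0) +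
    (cond (x 3) 2 0) + (cond (x 4) 1 0)) 0

def codesN : Nat → Nat := fun n =>
  [0, 801, 6408, 5673, 18497, 18272, 12617, 12904, 16908, 16683, 15108, 13347, 2635,
   1388, 4931, 4196, 18724, 17923, 12316, 13115, 227, 964, 6619, 5884, 1816, 2105,
   7712, 7425, 20185, 19960, 14305, 14528].getD n 0

def ddb (n : Nat) (i : Fin 5) : Bool := codesN n / 8 ^ (i : ℕ) % 2 == 1
def eev (n : Nat) (i : Fin 5) (a : Bool) : ℤ :=
  if codesN n / 8 ^ (i : ℕ) / (cond a 4 2) % 2 = 1 then -1 else 1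

def σ5 : Equiv.Perm (Fin 5) :=
  ⟨![1, 4, 2, 0, 3], ![3, 0, 2, 4, 1], by intro x; fin_cases x <;> rfl,
    by intro x; fin_cases x <;> rfl⟩

def wv (b : Bool) : (Fin 5 → Bool) → ℂ := fun x => ((czv b x : ℤ) : ℂ)

def y0v : Fin 5 → Bool := fun _ => false
def y1v : Fin 5 → Bool := fun i => i = 4
def pOdd (x : Fin 5 → Bool) : Bool :=
  xor (x 0) (xor (x 1) (xor (x 2) (xor (x 3) (x 4))))
def nTbl (x : Fin 5 → Bool) : ℕ :=
  [0, 0, 10, 10, 15, 15, 5, 5, 2, 2, 8, 8, 13, 13, 7, 7, 11, 11, 1, 1, 4, 4, 14, 14,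
   9, 9, 3, 3, 6, 6, 12, 12].getD ((cond (x 0) 16 0) + (cond (x 1) 8 0) + (cond (x 2) 4 0) +
    (cond (x 3) 2 0) + (cond (x 4) 1 0)) 0

-- ===================== decidable computations =====================

lemma hsel : ∀ k : Fin 5, selL (2 ^ (k : ℕ)) = [k] := by decide

lemma hfixP : ∀ (k : Fin 4) (b : Bool) (x : Fin 5 → Bool),
    (∏ i, eev (2 ^ ((k.castSucc : Fin 5) : ℕ)) i (x i))
      * czv b (fun i => xor (ddb (2 ^ ((k.castSucc : Fin 5) : ℕ)) i) (x i)) = czv b x := by decide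

lemma hXmk : zX = mkSP true (fun _ => 1) := by decide

lemma hXrel : ∀ x : Fin 5 → Bool, czv false (fun i => xor true (x i)) = czv true x := by decide

lemma hTbl : ∀ x : Fin 5 → Bool, nTbl x < 16 ∧
    x = (fun i => xor (ddb (nTbl x) i) (cond (pOdd x) (y1v i) (y0v i))) ∧
    (∏ i, eev (nTbl x) i (cond (pOdd x) (y1v i) (y0v i)))
      * (cond (pOdd x) (-czv true x) (czv false x)) = 1 ∧
    (cond (pOdd x) (czv false x) (czv true x)) = 0 := by decide

lemma hZy1a : (∏ i, eev (2 ^ ((4 : Fin 5) : ℕ)) i (y1v i)) = -1 := by decide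

lemma hZy1b : (fun i => xor (ddb (2 ^ ((4 : Fin 5) : ℕ)) i) (y1v i)) = y1v := by decide

set_option maxHeartbeats 2000000 in
lemma hE : ∀ (n : Fin 32) (i : Fin 5), prodG (selL (n : ℕ)) i = mkSP (ddb (n : ℕ) i) (eev (n : ℕ) i) := by
  decide

set_option maxHeartbeats 2000000 in
lemma hHad0 : ∀ y : Fin 5 → Bool,
    (tzM (fun _ => zH) *ᵥ czv false) (fun i => y (σ5 i)) = -4 * (czv false y + czv true y) := by
  decide

set_option maxHeartbeats 2000000 in
lemma hHad1 : ∀ y : Fin 5 → Bool,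
    (tzM (fun _ => zH) *ᵥ czv true) (fun i => y (σ5 i)) = -4 * (czv false y - czv true y) := by
  decide

lemma tz_one : tzM (fun _ => 1) = 1 := by decide

-- ===================== structural lemmas =====================

lemma tzMul (P Q : Fin 5 → Matrix Bool Bool ℤ) :
    tzM P * tzM Q = tzM fun i => P i * Q i := by
  ext x y
  simp only [tzM, Matrix.mul_apply, Matrix.of_apply]
  rw [Finset.prod_univ_sum, Fintype.piFinset_univ]
  exact Finset.sum_congr rfl fun z _ => (Finset.prod_mul_distrib).symm

lemma tz_mk (d : Fin 5 → Bool) (e : Fin 5 → Bool → ℤ) (x y : Fin 5 → Bool) :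
    tzM (fun i => mkSP (d i) (e i)) x y
      = if y = (fun i => xor (d i) (x i)) then ∏ i, e i (x i) else 0 := by
  simp only [tzM, mkSP, Matrix.of_apply]
  by_cases h : y = fun i => xor (d i) (x i)
  · rw [if_pos h]
    subst h
    exact Finset.prod_congr rfl fun i _ => if_pos rfl
  · rw [if_neg h]
    obtain ⟨i, hi⟩ := Function.ne_iff.mp h
    exact Finset.prod_eq_zero (Finset.mem_univ i) (if_neg hi)

lemma mk_mulVecC (d : Fin 5 → Bool) (e : Fin 5 → Bool → ℤ) (v : (Fin 5 → Bool) → ℂ)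
    (x : Fin 5 → Bool) :
    (castM (tzM (fun i => mkSP (d i) (e i))) *ᵥ v) x
      = ((∏ i, e i (x i) : ℤ) : ℂ) * v (fun i => xor (d i) (x i)) := by
  simp only [castM, Matrix.mulVec, dotProduct, Matrix.map_apply, tz_mk]
  rw [Finset.sum_eq_single (fun i => xor (d i) (x i))]
  · rw [if_pos rfl]
  · intro y _ hy
    rw [if_neg hy, Int.cast_zero, zero_mul]
  · intro hnot
    exact absurd (Finset.mem_univ _) hnot

lemma castM_mul (M N : Matrix (Fin 5 → Bool) (Fin 5 → Bool) ℤ) :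
    castM (M * N) = castM M * castM N :=
  Matrix.map_mul (f := Int.castRingHom ℂ)

lemma castM_one : castM 1 = 1 :=
  Matrix.map_one (Int.cast : ℤ → ℂ) Int.cast_zero Int.cast_one

lemma castM_mulVec_int (M : Matrix (Fin 5 → Bool) (Fin 5 → Bool) ℤ) (w : (Fin 5 → Bool) → ℤ) :
    castM M *ᵥ (fun x => ((w x : ℤ) : ℂ)) = fun x => (((M *ᵥ w) x : ℤ) : ℂ) := by
  funext x
  simp [castM, Matrix.mulVec, dotProduct, Matrix.map_apply]

lemma fixed_list (v : (Fin 5 → Bool) → ℂ) :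
    ∀ L : List (Fin 5), (∀ k ∈ L, castM (tzM (gensZ k)) *ᵥ v = v) →
      castM (tzM (prodG L)) *ᵥ v = v := by
  intro L
  induction L with
  | nil =>
    intro _
    show castM (tzM fun _ => 1) *ᵥ v = v
    rw [tz_one, castM_one, Matrix.one_mulVec]
  | cons k L ih =>
    intro h
    have h1 : (tzM (prodG (k :: L))) = tzM (gensZ k) * tzM (prodG L) := by
      rw [tzMul]; rfl
    rw [h1, castM_mul, ← Matrix.mulVec_mulVec, ih (fun j hj => h j (List.mem_cons_of_mem _ hj)),
      h k List.mem_cons_self]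

lemma permMat_mulVec (σ : Equiv.Perm (Fin 5)) (w : (Fin 5 → Bool) → ℂ) (y : Fin 5 → Bool) :
    (permMat σ *ᵥ w) y = w (fun i => y (σ i)) := by
  have key : ∀ x : Fin 5 → Bool, (y = x ∘ σ.symm) ↔ (x = fun i => y (σ i)) := by
    intro x
    constructor
    · rintro rfl; funext i; simp
    · rintro rfl; funext i; simp
  simp only [permMat, Matrix.mulVec, dotProduct, Matrix.of_apply]
  calc ∑ x, (if y = x ∘ σ.symm then 1 else 0) * w x
      = ∑ x, (if x = (fun i => y (σ i)) then w x else 0) := by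
        refine Finset.sum_congr rfl fun x _ => ?_
        by_cases h : x = fun i => y (σ i)
        · rw [if_pos ((key x).mpr h), if_pos h, one_mul]
        · rw [if_neg (fun hc => h ((key x).mp hc)), if_neg h, zero_mul]
    _ = w (fun i => y (σ i)) := by
        rw [Finset.sum_ite_eq' Finset.univ (fun i => y (σ i)) w, if_pos (Finset.mem_univ _)]

lemma tensMat_cast (P : Fin 5 → Matrix Bool Bool ℂ) (Q : Fin 5 → Matrix Bool Bool ℤ)
    (h : ∀ i a b, P i a b = ((Q i a b : ℤ) : ℂ)) : tensMat P = castM (tzM Q) := by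
  ext x y
  simp only [tensMat, tzM, castM, Matrix.of_apply, Matrix.map_apply, Int.cast_prod]
  exact Finset.prod_congr rfl fun i _ => h i (x i) (y i)

lemma cast_x : ∀ a b, σx a b = ((zX a b : ℤ) : ℂ) := by
  intro a b; rcases a <;> rcases b <;> norm_num [σx, zX]

lemma cast_z : ∀ a b, σz a b = ((zZ a b : ℤ) : ℂ) := by
  intro a b; rcases a <;> rcases b <;> norm_num [σz, zZ]

lemma cast_o : ∀ a b, (1 : Matrix Bool Bool ℂ) a b = (((1 : Matrix Bool Bool ℤ) a b : ℤ) : ℂ) := by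
  intro a b; rcases a <;> rcases b <;> norm_num [Matrix.one_apply]

lemma stab_cast : ∀ k : Fin 4, fiveStab k = castM (tzM (gensZ k.castSucc)) := by
  intro k
  fin_cases k <;>
    exact tensMat_cast _ _ (fun i a b => by
      fin_cases i <;> first
        | exact cast_x a b
        | exact cast_z a b
        | exact cast_o a b)

lemma Zall_cast : (tensMat fun _ : Fin 5 => σz) = castM (tzM (gensZ 4)) :=
  tensMat_cast _ _ (fun i a b => by fin_cases i <;> exact cast_z a b)

lemma Xall_cast : (tensMat fun _ : Fin 5 => σx) = castM (tzM (fun _ => zX)) :=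
  tensMat_cast _ _ (fun _ a b => cast_x a b)

lemma hfac : ∀ a b : Bool, Hgate a b = ((zH a b : ℤ) : ℂ) * (Real.sqrt 2 : ℂ)⁻¹ := by
  intro a b; rcases a <;> rcases b <;> norm_num [Hgate, zH, div_eq_mul_inv]

lemma tensH_cast : (tensMat fun _ : Fin 5 => Hgate)
    = ((Real.sqrt 2 : ℂ)⁻¹ ^ 5) • castM (tzM (fun _ => zH)) := by
  ext x y
  simp only [tensMat, tzM, castM, Matrix.smul_apply, Matrix.of_apply, Matrix.map_apply,
    smul_eq_mul, Int.cast_prod]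
  calc ∏ i : Fin 5, Hgate (x i) (y i)
      = ∏ i : Fin 5, (((zH (x i) (y i) : ℤ) : ℂ) * (Real.sqrt 2 : ℂ)⁻¹) :=
        Finset.prod_congr rfl fun i _ => hfac (x i) (y i)
    _ = (∏ i : Fin 5, ((zH (x i) (y i) : ℤ) : ℂ)) * ((Real.sqrt 2 : ℂ)⁻¹) ^ 5 := by
        rw [Finset.prod_mul_distrib, Finset.prod_const, Finset.card_univ, Fintype.card_fin]
    _ = (Real.sqrt 2 : ℂ)⁻¹ ^ 5 * ∏ i : Fin 5, ((zH (x i) (y i) : ℤ) : ℂ) := mul_comm _ _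

-- ===================== codespace structure =====================

lemma mulVec_irrel {n : Type*} (i1 i2 : Fintype n) {α : Type*} [NonUnitalNonAssocSemiring α]
    (M : Matrix n n α) (v : n → α) :
    @Matrix.mulVec n n α _ i1 M v = @Matrix.mulVec n n α _ i2 M v := by
  cases Subsingleton.elim i1 i2; rfl

lemma code_fix {v : (Fin 5 → Bool) → ℂ} (hv : v ∈ fiveCodespace) (k : Fin 4) :
    castM (tzM (gensZ k.castSucc)) *ᵥ v = v := by
  rw [← stab_cast k]
  exact (mulVec_irrel inferInstance _ _ _).trans (hv (fiveStab k) ⟨k, rfl⟩)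

lemma gens_mk (k : Fin 5) : tzM (gensZ k)
    = tzM (fun i => mkSP (ddb (2 ^ (k : ℕ)) i) (eev (2 ^ (k : ℕ)) i)) := by
  have h1 : tzM (gensZ k) = tzM (prodG (selL (2 ^ (k : ℕ)))) := by
    rw [hsel k]
    exact congrArg tzM (funext fun i => (mul_one _).symm)
  rw [h1]
  exact congrArg tzM (funext fun i => hE ⟨2 ^ (k : ℕ), by fin_cases k <;> norm_num⟩ i)

lemma stab_wv (b : Bool) (k : Fin 4) : castM (tzM (gensZ k.castSucc)) *ᵥ wv b = wv b := by
  funext x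
  rw [gens_mk k.castSucc, mk_mulVecC]
  show _ * ((czv b (fun i => xor (ddb (2 ^ ((k.castSucc : Fin 5) : ℕ)) i) (x i)) : ℤ) : ℂ)
      = ((czv b x : ℤ) : ℂ)
  rw [← Int.cast_mul, hfixP k b x]

lemma wv_raw (b : Bool) (k : Fin 4) : fiveStab k *ᵥ wv b = wv b := by
  rw [stab_cast k]
  exact stab_wv b k

lemma wv_mem (b : Bool) : wv b ∈ fiveCodespace := by
  intro g hg
  obtain ⟨k, rfl⟩ := hg
  exact (mulVec_irrel _ inferInstance _ _).trans (wv_raw b k)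

lemma elem_fixed (v : (Fin 5 → Bool) → ℂ)
    (hv : ∀ k : Fin 4, castM (tzM (gensZ k.castSucc)) *ᵥ v = v) (n : ℕ) (hn : n < 16 ∨
      castM (tzM (gensZ 4)) *ᵥ v = v) :
    castM (tzM (prodG (selL n))) *ᵥ v = v := by
  apply fixed_list
  intro k hk
  have hk' : n / 2 ^ (k : ℕ) % 2 = 1 := by
    simpa [selL, List.mem_filter] using hk
  fin_cases k
  · exact hv 0
  · exact hv 1
  · exact hv 2
  · exact hv 3
  · rcases hn with hn | hn
    · exfalso; norm_num at hk'; omega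
    · exact hn

lemma rep4 (v : (Fin 5 → Bool) → ℂ)
    (hv' : ∀ k : Fin 4, castM (tzM (gensZ k.castSucc)) *ᵥ v = v) :
    v = (v y0v) • wv false + (-(v y1v)) • wv true := by
  funext x
  obtain ⟨hlt, hx, hsgn, hzero⟩ := hTbl x
  have hfix : castM (tzM (fun i => mkSP (ddb (nTbl x) i) (eev (nTbl x) i))) *ᵥ v = v := by
    have h0 := elem_fixed v hv' (nTbl x) (Or.inl hlt)
    rwa [congrArg tzM (funext fun i => hE ⟨nTbl x, by omega⟩ i)] at h0
  have h := congrFun hfix (fun i => cond (pOdd x) (y1v i) (y0v i))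
  rw [mk_mulVecC] at h
  simp only [← hx] at h
  simp only [Pi.add_apply, Pi.smul_apply, smul_eq_mul, wv]
  rcases ho : pOdd x with _ | _
  · rw [ho] at h hsgn hzero
    simp only [Bool.cond_false] at h hsgn hzero
    rw [show v (fun i => y0v i) = v y0v from rfl] at h
    rw [hzero]
    have hsgnC : ((∏ i, eev (nTbl x) i (y0v i) : ℤ) : ℂ) * ((czv false x : ℤ) : ℂ) = 1 := by
      exact_mod_cast congrArg (Int.cast : ℤ → ℂ) hsgn
    push_cast
    linear_combination ((czv false x : ℤ) : ℂ) * h - v x * hsgnC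
  · rw [ho] at h hsgn hzero
    simp only [Bool.cond_true] at h hsgn hzero
    rw [show v (fun i => y1v i) = v y1v from rfl] at h
    rw [hzero]
    have hsgnC : ((∏ i, eev (nTbl x) i (y1v i) : ℤ) : ℂ) * (-((czv true x : ℤ) : ℂ)) = 1 := by
      exact_mod_cast congrArg (Int.cast : ℤ → ℂ) hsgn
    push_cast
    linear_combination (-((czv true x : ℤ) : ℂ)) * h - v x * hsgnC

lemma rep5 (v : (Fin 5 → Bool) → ℂ)
    (hv' : ∀ k : Fin 4, castM (tzM (gensZ k.castSucc)) *ᵥ v = v)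
    (hz : castM (tzM (gensZ 4)) *ᵥ v = v) :
    v = (v y0v) • wv false := by
  have h := congrFun hz y1v
  rw [gens_mk 4, mk_mulVecC, hZy1a, hZy1b] at h
  have hy1 : v y1v = 0 := by
    have h' : (-1 : ℂ) * v y1v = v y1v := by exact_mod_cast h
    linear_combination (-(1 : ℂ) / 2) * h'
  have hrep := rep4 v hv'
  rw [hy1] at hrep
  simpa using hrep

-- ===================== Hadamard action =====================

lemma s2ne : (Real.sqrt 2 : ℂ) ≠ 0 := by
  rw [Ne, Complex.ofReal_eq_zero]
  positivity

lemma s2sq : (Real.sqrt 2 : ℂ) ^ 2 = 2 := by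
  rw [← Complex.ofReal_pow, Real.sq_sqrt (by norm_num : (2:ℝ) ≥ 0)]
  norm_num

lemma s2inv5 : ((Real.sqrt 2 : ℂ)⁻¹) ^ 5 = (Real.sqrt 2 : ℂ)⁻¹ / 4 := by
  have h : ((Real.sqrt 2 : ℂ)⁻¹) ^ 2 = 2⁻¹ := by
    rw [inv_pow, s2sq]
  calc ((Real.sqrt 2 : ℂ)⁻¹) ^ 5
      = (Real.sqrt 2 : ℂ)⁻¹ * (((Real.sqrt 2 : ℂ)⁻¹) ^ 2) ^ 2 := by ring
    _ = (Real.sqrt 2 : ℂ)⁻¹ / 4 := by rw [h]; ring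

lemma hstepH (b : Bool) : (tensMat fun _ : Fin 5 => Hgate) *ᵥ wv b
    = ((Real.sqrt 2 : ℂ)⁻¹ ^ 5) • fun x => (((tzM (fun _ => zH) *ᵥ czv b) x : ℤ) : ℂ) := by
  rw [tensH_cast, Matrix.smul_mulVec]
  congr 1
  exact castM_mulVec_int _ _

lemma UmulW0 :
    (permMat σ5 * tensMat fun _ : Fin 5 => Hgate) *ᵥ wv false
      = (-(Real.sqrt 2 : ℂ)⁻¹) • (wv false + wv true) := by
  rw [← Matrix.mulVec_mulVec, hstepH false, Matrix.mulVec_smul]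
  funext y
  simp only [Pi.smul_apply, smul_eq_mul, Pi.add_apply]
  rw [permMat_mulVec, hHad0 y]
  simp only [wv]
  push_cast
  rw [s2inv5]
  ring

lemma UmulW1 :
    (permMat σ5 * tensMat fun _ : Fin 5 => Hgate) *ᵥ wv true
      = (-(Real.sqrt 2 : ℂ)⁻¹) • (wv false - wv true) := by
  rw [← Matrix.mulVec_mulVec, hstepH true, Matrix.mulVec_smul]
  funext y
  simp only [Pi.smul_apply, smul_eq_mul, Pi.sub_apply]
  rw [permMat_mulVec, hHad1 y]
  simp only [wv]
  push_cast
  rw [s2inv5]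
  ring

lemma Xwv : castM (tzM (fun _ : Fin 5 => zX)) *ᵥ wv false = wv true := by
  have hzx : (fun _ : Fin 5 => zX) = (fun i : Fin 5 => mkSP true ((fun _ _ => 1) i)) :=
    funext fun _ => hXmk
  rw [hzx]
  funext x
  rw [mk_mulVecC]
  simp only [Finset.prod_const_one, Int.cast_one, one_mul]
  show ((czv false (fun i => xor true (x i)) : ℤ) : ℂ) = ((czv true x : ℤ) : ℂ)
  exact_mod_cast hXrel x

lemma span_eq : fiveCodespace = Submodule.span ℂ {wv false, wv true} := by
  apply le_antisymm
  · intro v hv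
    rw [rep4 v (code_fix hv)]
    exact Submodule.add_mem _
      (Submodule.smul_mem _ _ (Submodule.subset_span (Set.mem_insert _ _)))
      (Submodule.smul_mem _ _ (Submodule.subset_span (Set.mem_insert_of_mem _ rfl)))
  · rw [Submodule.span_le]
    rintro z (rfl | rfl)
    · exact wv_mem false
    · exact wv_mem true

set_option maxHeartbeats 2000000 in
/-- there is a permutation `σ` of the five qubits fixing qubit 3 such
that `P_σ · H^{⊗5}` maps the 5-qubit codespace onto itself and implements, up to a
global phase, the logical Hadamard gate. -/
theorem stmt10 :
    ∃ σ : Equiv.Perm (Fin 5), σ 2 = 2 ∧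
      Submodule.map (permMat σ * tensMat fun _ : Fin 5 => Hgate).mulVecLin fiveCodespace
        = fiveCodespace ∧
      ∀ v : Bool → ((Fin 5 → Bool) → ℂ), fiveLogical v →
        ∃ ω : ℂ, ‖ω‖ = 1 ∧
          (permMat σ * tensMat fun _ : Fin 5 => Hgate).mulVec (v false)
            = (ω / (Real.sqrt 2 : ℂ)) • (v false + v true) ∧
          (permMat σ * tensMat fun _ : Fin 5 => Hgate).mulVec (v true)
            = (ω / (Real.sqrt 2 : ℂ)) • (v false - v true) := by
  refine ⟨σ5, by decide, ?_, ?_⟩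
  · -- codespace is mapped onto itself
    rw [span_eq, Submodule.map_span]
    have himg : (permMat σ5 * tensMat fun _ : Fin 5 => Hgate).mulVecLin '' {wv false, wv true}
        = {(permMat σ5 * tensMat fun _ : Fin 5 => Hgate) *ᵥ wv false,
           (permMat σ5 * tensMat fun _ : Fin 5 => Hgate) *ᵥ wv true} := by
      rw [Set.image_insert_eq, Set.image_singleton, Matrix.mulVecLin_apply, Matrix.mulVecLin_apply]
    rw [himg]
    have hs1 : (Real.sqrt 2 : ℂ) * (Real.sqrt 2 : ℂ)⁻¹ = 1 := mul_inv_cancel₀ s2ne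
    apply le_antisymm
    · rw [Submodule.span_le]
      rintro z (rfl | rfl)
      · rw [UmulW0]
        exact Submodule.smul_mem _ _ (Submodule.add_mem _
          (Submodule.subset_span (Set.mem_insert _ _))
          (Submodule.subset_span (Set.mem_insert_of_mem _ rfl)))
      · rw [UmulW1]
        exact Submodule.smul_mem _ _ (Submodule.sub_mem _
          (Submodule.subset_span (Set.mem_insert _ _))
          (Submodule.subset_span (Set.mem_insert_of_mem _ rfl)))
    · rw [Submodule.span_le]
      have h0 : wv false = (-(Real.sqrt 2 : ℂ) / 2) •
            ((permMat σ5 * tensMat fun _ : Fin 5 => Hgate) *ᵥ wv false)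
          + (-(Real.sqrt 2 : ℂ) / 2) •
            ((permMat σ5 * tensMat fun _ : Fin 5 => Hgate) *ᵥ wv true) := by
        rw [UmulW0, UmulW1]
        funext y
        simp only [Pi.smul_apply, Pi.add_apply, smul_eq_mul]
        have expand : ∀ c d : ℂ,
            -(Real.sqrt 2 : ℂ) / 2 * (-(Real.sqrt 2 : ℂ)⁻¹ * (c + d))
              + -(Real.sqrt 2 : ℂ) / 2 * (-(Real.sqrt 2 : ℂ)⁻¹ * (c - d)) = c := by
          intro c d
          have hne := s2ne
          field_simp
          ring
        exact (expand _ _).symm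
      have h1 : wv true = (-(Real.sqrt 2 : ℂ) / 2) •
            ((permMat σ5 * tensMat fun _ : Fin 5 => Hgate) *ᵥ wv false)
          + ((Real.sqrt 2 : ℂ) / 2) •
            ((permMat σ5 * tensMat fun _ : Fin 5 => Hgate) *ᵥ wv true) := by
        rw [UmulW0, UmulW1]
        funext y
        simp only [Pi.smul_apply, Pi.add_apply, smul_eq_mul]
        have expand : ∀ c d : ℂ,
            -(Real.sqrt 2 : ℂ) / 2 * (-(Real.sqrt 2 : ℂ)⁻¹ * (c + d))
              + (Real.sqrt 2 : ℂ) / 2 * (-(Real.sqrt 2 : ℂ)⁻¹ * (c - d)) = d := by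
          intro c d
          have hne := s2ne
          field_simp
          ring
        exact (expand _ _).symm
      have hmem0 : ∀ c d : ℂ, (c • ((permMat σ5 * tensMat fun _ : Fin 5 => Hgate) *ᵥ wv false)
            + d • ((permMat σ5 * tensMat fun _ : Fin 5 => Hgate) *ᵥ wv true))
          ∈ Submodule.span ℂ {(permMat σ5 * tensMat fun _ : Fin 5 => Hgate) *ᵥ wv false,
              (permMat σ5 * tensMat fun _ : Fin 5 => Hgate) *ᵥ wv true} := fun c d =>
        Submodule.add_mem _
          (Submodule.smul_mem _ _ (Submodule.subset_span (Set.mem_insert _ _)))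
          (Submodule.smul_mem _ _ (Submodule.subset_span (Set.mem_insert_of_mem _ rfl)))
      rintro z (rfl | rfl)
      · exact Set.mem_of_eq_of_mem h0 (hmem0 (-(Real.sqrt 2 : ℂ) / 2) (-(Real.sqrt 2 : ℂ) / 2))
      · exact Set.mem_of_eq_of_mem h1 (hmem0 (-(Real.sqrt 2 : ℂ) / 2) ((Real.sqrt 2 : ℂ) / 2))
  · -- logical Hadamard up to global phase
    intro v hv
    obtain ⟨hmem, _hnorm, hZ0, _hZ1, hX0⟩ := hv
    set α : ℂ := v false y0v with hα
    have hz : castM (tzM (gensZ 4)) *ᵥ v false = v false := by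
      rw [← Zall_cast]; exact hZ0
    have hv0 : v false = α • wv false := rep5 (v false) (code_fix (hmem false)) hz
    have hv1 : v true = α • wv true := by
      rw [← hX0, hv0, Matrix.mulVec_smul, Xall_cast, Xwv]
    refine ⟨-1, by simp, ?_, ?_⟩
    · rw [hv0, hv1, Matrix.mulVec_smul, UmulW0]
      funext y
      simp only [Pi.smul_apply, Pi.add_apply, smul_eq_mul]
      ring
    · rw [hv0, hv1, Matrix.mulVec_smul, UmulW1]
      funext y
      simp only [Pi.smul_apply, Pi.add_apply, Pi.sub_apply, smul_eq_mul]
      ring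

end
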